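/- Let A and B be n×n matrices over a field, with A invertible, and set C = B·A⁻¹. Then the sum over all pairs 1 ≤ r < s ≤ n of the determinant of the matrix obtained from A by replacing its r-th column by B_r and its s-th column by B_s equals (det A)·Σ_{r<s} (C_{rr}·C_{ss} − C_{rs}·C_{sr}). -/

import Mathlib

open Matrix

section Aux

variable {K : Type*} [Field K] {n : ℕ}

private lemma perm_eq_one_or_swap (σ : Equiv.Perm (Fin n)) (r s : Fin n) (hrs : r ≠ s)
    (h : ∀ i, i ≠ r → i ≠ s → σ i = i) : σ = 1 ∨ σ = Equiv.swap r s := by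
  have hr : σ r = r ∨ σ r = s := by
    by_contra hc
    push_neg at hc
    exact hc.1 (σ.injective (h (σ r) hc.1 hc.2))
  have hs : σ s = r ∨ σ s = s := by
    by_contra hc
    push_neg at hc
    exact hc.2 (σ.injective (h (σ s) hc.1 hc.2))
  rcases hr with hr | hr
  · left
    rcases hs with hs | hs
    · exact absurd (σ.injective (hs.trans hr.symm)) (Ne.symm hrs)
    · ext i
      by_cases hir : i = r
      · simp [hir, hr]
      by_cases his : i = s
      · simp [his, hs]
      · simp [h i hir his]
  · rcases hs with hs | hs
    · right
      ext i
      by_cases hir : i = r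
      · simp [hir, hr, Equiv.swap_apply_left]
      by_cases his : i = s
      · simp [his, hs, Equiv.swap_apply_right]
      · simp [h i hir his, Equiv.swap_apply_of_ne_of_ne hir his]
    · exact absurd (σ.injective (hr.trans hs.symm)) hrs

private lemma det_updateColumn_one_one {r s : Fin n} (hrs : r ≠ s) (u v : Fin n → K) :
    (((1 : Matrix (Fin n) (Fin n) K).updateCol r u).updateCol s v).det
      = u r * v s - u s * v r := by
  set M := ((1 : Matrix (Fin n) (Fin n) K).updateCol r u).updateCol s v with hM
  have hMe : ∀ i j, j ≠ r → j ≠ s → M i j = (1 : Matrix (Fin n) (Fin n) K) i j := by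
    intro i j hjr hjs
    rw [hM, Matrix.updateCol_ne hjs, Matrix.updateCol_ne hjr]
  have hMr : ∀ i, M i r = u i := by
    intro i
    rw [hM, Matrix.updateCol_ne hrs, Matrix.updateCol_self]
  have hMs : ∀ i, M i s = v i := by
    intro i
    rw [hM, Matrix.updateCol_self]
  have hswap : (1 : Equiv.Perm (Fin n)) ≠ Equiv.swap r s := by
    intro h
    exact hrs (Equiv.swap_eq_one_iff.mp h.symm)
  rw [Matrix.det_apply]
  have key : ∑ σ : Equiv.Perm (Fin n), Equiv.Perm.sign σ • ∏ i, M (σ i) i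
      = ∑ σ ∈ ({1, Equiv.swap r s} : Finset (Equiv.Perm (Fin n))),
          Equiv.Perm.sign σ • ∏ i, M (σ i) i := by
    refine (Finset.sum_subset (Finset.subset_univ _) ?_).symm
    intro σ _ hσ
    have hex : ¬ ∀ i, i ≠ r → i ≠ s → σ i = i := by
      intro hall
      rcases perm_eq_one_or_swap σ r s hrs hall with h | h <;> simp [h] at hσ
    push_neg at hex
    obtain ⟨i, hir, his, hi⟩ := hex
    have hz : M (σ i) i = 0 := by
      rw [hMe _ _ hir his]
      exact Matrix.one_apply_ne hi
    have hp : ∏ x : Fin n, M (σ x) x = 0 :=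
      Finset.prod_eq_zero (f := fun x => M (σ x) x) (Finset.mem_univ i) hz
    rw [hp, smul_zero]
  rw [key, Finset.sum_pair hswap]
  have hprod1 : ∏ i, M i i = u r * v s := by
    have hsub : ∏ i ∈ ({r, s} : Finset (Fin n)), M i i = ∏ i, M i i := by
      refine Finset.prod_subset (Finset.subset_univ _) ?_
      intro i _ hi
      simp only [Finset.mem_insert, Finset.mem_singleton, not_or] at hi
      rw [hMe _ _ hi.1 hi.2]
      exact Matrix.one_apply_eq i
    rw [← hsub, Finset.prod_pair hrs, hMr, hMs]
  have hprod2 : ∏ i, M (Equiv.swap r s i) i = u s * v r := by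
    have hsub : ∏ i ∈ ({r, s} : Finset (Fin n)), M (Equiv.swap r s i) i
        = ∏ i, M (Equiv.swap r s i) i := by
      refine Finset.prod_subset (Finset.subset_univ _) ?_
      intro i _ hi
      simp only [Finset.mem_insert, Finset.mem_singleton, not_or] at hi
      rw [Equiv.swap_apply_of_ne_of_ne hi.1 hi.2, hMe _ _ hi.1 hi.2]
      exact Matrix.one_apply_eq i
    rw [← hsub, Finset.prod_pair hrs, Equiv.swap_apply_left, Equiv.swap_apply_right, hMr, hMs]
  simp only [Equiv.Perm.one_apply]
  rw [hprod1, hprod2]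
  simp [Equiv.Perm.sign_swap hrs, sub_eq_add_neg]

private lemma det_two_update (A B : Matrix (Fin n) (Fin n) K) (hA : IsUnit A.det)
    {r s : Fin n} (hrs : r ≠ s) :
    ((A.updateCol r (fun i => B i r)).updateCol s (fun i => B i s)).det
      = A.det * ((A⁻¹ * B) r r * (A⁻¹ * B) s s - (A⁻¹ * B) r s * (A⁻¹ * B) s r) := by
  have hAB : A * (A⁻¹ * B) = B := by
    rw [← Matrix.mul_assoc, Matrix.mul_nonsing_inv A hA, Matrix.one_mul]
  set D := A⁻¹ * B with hD
  have key : (A.updateCol r (fun i => B i r)).updateCol s (fun i => B i s)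
      = A * (((1 : Matrix (Fin n) (Fin n) K).updateCol r (fun i => D i r)).updateCol s
          (fun i => D i s)) := by
    ext i j
    rw [Matrix.mul_apply]
    rcases eq_or_ne j s with hj | hj
    · subst hj
      simp only [Matrix.updateCol_self]
      rw [← Matrix.mul_apply, hAB]
    · simp only [Matrix.updateCol_ne hj]
      rcases eq_or_ne j r with hjr | hjr
      · subst hjr
        simp only [Matrix.updateCol_self]
        rw [← Matrix.mul_apply, hAB]
      · simp only [Matrix.updateCol_ne hjr]
        rw [← Matrix.mul_apply, Matrix.mul_one]
  rw [key, Matrix.det_mul, det_updateColumn_one_one hrs]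
  ring

private lemma sum_pairs (g : Fin n → Fin n → K) :
    ∑ r : Fin n, ∑ s ∈ Finset.univ.filter (fun s : Fin n => r < s), g r s
      = ∑ p ∈ (Finset.univ ×ˢ Finset.univ).filter (fun p : Fin n × Fin n => p.1 < p.2),
          g p.1 p.2 := by
  rw [Finset.sum_filter, Finset.sum_product]
  simp [Finset.sum_filter]

private lemma sum_split (F : Fin n → Fin n → K) (h0 : ∀ i, F i i = 0) :
    ∑ i : Fin n, ∑ j : Fin n, F i j
      = ∑ i : Fin n, ∑ j ∈ Finset.univ.filter (fun j : Fin n => i < j), (F i j + F j i) := by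
  have h1 : ∀ i : Fin n, ∑ j : Fin n, F i j
      = ∑ j ∈ Finset.univ.filter (fun j : Fin n => i < j), F i j
        + ∑ j ∈ Finset.univ.filter (fun j : Fin n => j < i), F i j := by
    intro i
    rw [← Finset.sum_filter_add_sum_filter_not Finset.univ (fun j => i < j) (F i)]
    congr 1
    have hins : Finset.univ.filter (fun j : Fin n => ¬ i < j)
        = insert i (Finset.univ.filter (fun j : Fin n => j < i)) := by
      ext j
      simp [not_lt, le_iff_lt_or_eq, or_comm, eq_comm]
    rw [hins, Finset.sum_insert (by simp), h0, zero_add]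
  simp_rw [h1, Finset.sum_add_distrib]
  congr 1
  exact Finset.sum_comm' (by simp)

private lemma minor_mul (X Y : Matrix (Fin n) (Fin n) K) (r s : Fin n) :
    (X * Y) r r * (X * Y) s s - (X * Y) r s * (X * Y) s r
      = ∑ i : Fin n, ∑ j ∈ Finset.univ.filter (fun j : Fin n => i < j),
          (X r i * X s j - X r j * X s i) * (Y i r * Y j s - Y i s * Y j r) := by
  have step1 : (X * Y) r r * (X * Y) s s - (X * Y) r s * (X * Y) s r
      = ∑ i : Fin n, ∑ j : Fin n, X r i * X s j * (Y i r * Y j s - Y i s * Y j r) := by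
    simp only [Matrix.mul_apply, Finset.sum_mul_sum]
    rw [← Finset.sum_sub_distrib]
    refine Finset.sum_congr rfl fun i _ => ?_
    rw [← Finset.sum_sub_distrib]
    refine Finset.sum_congr rfl fun j _ => ?_
    ring
  rw [step1, sum_split (fun i j => X r i * X s j * (Y i r * Y j s - Y i s * Y j r))
    (fun i => by ring)]
  refine Finset.sum_congr rfl fun i _ => Finset.sum_congr rfl fun j _ => ?_
  ring

private lemma sum_minor_comm (X Y : Matrix (Fin n) (Fin n) K) :
    ∑ r : Fin n, ∑ s ∈ Finset.univ.filter (fun s : Fin n => r < s),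
        ((X * Y) r r * (X * Y) s s - (X * Y) r s * (X * Y) s r)
      = ∑ r : Fin n, ∑ s ∈ Finset.univ.filter (fun s : Fin n => r < s),
          ((Y * X) r r * (Y * X) s s - (Y * X) r s * (Y * X) s r) := by
  simp_rw [minor_mul]
  rw [sum_pairs, sum_pairs]
  simp_rw [sum_pairs]
  rw [Finset.sum_comm]
  exact Finset.sum_congr rfl fun p _ => Finset.sum_congr rfl fun q _ => by ring

end Aux

/-- Haine–Semengue lemma (ii): the sum over pairs `r < s` of determinants of `A`
with columns `r` and `s` replaced by the corresponding columns of `B` equals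
`det A · Σ_{r<s} (C_{rr} C_{ss} − C_{rs} C_{sr})` where `C = B A⁻¹`. -/
theorem sum_det_two_column_replacement {K : Type*} [Field K] {n : ℕ}
    (A B : Matrix (Fin n) (Fin n) K) (hA : IsUnit A.det) :
    ∑ r : Fin n, ∑ s ∈ Finset.univ.filter (fun s : Fin n => r < s),
        ((A.updateCol r (fun i => B i r)).updateCol s (fun i => B i s)).det
      = A.det * ∑ r : Fin n, ∑ s ∈ Finset.univ.filter (fun s : Fin n => r < s),
          ((B * A⁻¹) r r * (B * A⁻¹) s s - (B * A⁻¹) r s * (B * A⁻¹) s r) := by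
  have h1 : ∑ r : Fin n, ∑ s ∈ Finset.univ.filter (fun s : Fin n => r < s),
      ((A.updateCol r (fun i => B i r)).updateCol s (fun i => B i s)).det
    = ∑ r : Fin n, ∑ s ∈ Finset.univ.filter (fun s : Fin n => r < s),
        A.det * ((A⁻¹ * B) r r * (A⁻¹ * B) s s - (A⁻¹ * B) r s * (A⁻¹ * B) s r) := by
    refine Finset.sum_congr rfl fun r _ => Finset.sum_congr rfl fun s hs => ?_
    exact det_two_update A B hA (Finset.mem_filter.mp hs).2.ne
  rw [h1]
  simp_rw [← Finset.mul_sum]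
  congr 1
  exact sum_minor_comm A⁻¹ B
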